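/- For every integer ℓ ≥ 1 there is a constant C (depending only on ℓ) such that for any probability vector μ on {1,…,d} with all entries positive, any i ∈ {1,…,d} and any N ≥ 1: |E[(S[i]/(N μ[i]))^ℓ − 1]| ≤ ℓ(ℓ−1)/(2N μ[i]) + C Σ_{k=3}^{ℓ} N^{−k/2} μ[i]^{−(k−1)}, where S is multinomial with parameters N and μ (the sum from k=3 to ℓ is empty when ℓ ≤ 2). -/

import Mathlib

open Finset

/-- Expectation of `f` of a multinomial random vector with parameters `N` and `μ`. -/
noncomputable def multinomialExp (d N : ℕ) (μ : Fin d → ℝ) (f : (Fin d → ℕ) → ℝ) : ℝ :=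
  ∑ k ∈ Finset.Nat.antidiagonalTuple d N,
    ((Nat.multinomial Finset.univ k : ℝ) * ∏ i, μ i ^ k i) * f k

namespace MultProof

/-- centered Bernoulli moment -/
noncomputable def eMom (p : ℝ) (c : ℕ) : ℝ := (1 - p) * (-p) ^ c + p * (1 - p) ^ c

lemma eMom_zero (p : ℝ) : eMom p 0 = 1 := by simp [eMom]

lemma eMom_one (p : ℝ) : eMom p 1 = 0 := by simp [eMom]; ring

lemma abs_eMom_le (p : ℝ) (hp0 : 0 ≤ p) (hp1 : p ≤ 1) (c : ℕ) :
    |eMom p c| ≤ (1 - p) * p ^ c + p * (1 - p) ^ c := by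
  have h1 : (0:ℝ) ≤ 1 - p := by linarith
  calc |eMom p c| ≤ |(1 - p) * (-p) ^ c| + |p * (1 - p) ^ c| := abs_add_le _ _
    _ = (1 - p) * p ^ c + p * (1 - p) ^ c := by
        rw [abs_mul, abs_mul, abs_pow, abs_pow, abs_neg, abs_of_nonneg hp0,
          abs_of_nonneg h1]

lemma abs_eMom_le_one (p : ℝ) (hp0 : 0 ≤ p) (hp1 : p ≤ 1) (c : ℕ) :
    |eMom p c| ≤ 1 := by
  have h1 : (0:ℝ) ≤ 1 - p := by linarith
  have h2 : p ^ c ≤ 1 := pow_le_one₀ hp0 hp1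
  have h3 : (1 - p) ^ c ≤ 1 := pow_le_one₀ h1 (by linarith)
  have := abs_eMom_le p hp0 hp1 c
  nlinarith

lemma abs_eMom_le_p (p : ℝ) (hp0 : 0 ≤ p) (hp1 : p ≤ 1) {c : ℕ} (hc : 2 ≤ c) :
    |eMom p c| ≤ p := by
  have h1 : (0:ℝ) ≤ 1 - p := by linarith
  have h2 : p ^ c ≤ p ^ 2 := pow_le_pow_of_le_one hp0 hp1 hc
  have h3 : (1 - p) ^ c ≤ (1 - p) ^ 2 := pow_le_pow_of_le_one h1 (by linarith) hc
  have := abs_eMom_le p hp0 hp1 c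
  nlinarith


/-- binomial expectation -/
noncomputable def binExp (N : ℕ) (p : ℝ) (g : ℕ → ℝ) : ℝ :=
  ∑ m ∈ Finset.range (N + 1), (N.choose m : ℝ) * p ^ m * (1 - p) ^ (N - m) * g m

/-- number of `true`s -/
def cnt {N : ℕ} (b : Fin N → Bool) : ℕ := #(univ.filter (fun t => b t = true))

lemma prodModel (N : ℕ) (p : ℝ) (g : ℕ → ℝ) :
    (∑ b : Fin N → Bool, (∏ t, if b t = true then p else (1 - p)) * g (cnt b))
      = binExp N p g := by
  classical
  have step1 : (∑ b : Fin N → Bool, (∏ t, if b t = true then p else (1 - p)) * g (cnt b))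
      = ∑ s ∈ (univ : Finset (Fin N)).powerset, p ^ s.card * (1 - p) ^ (N - s.card) * g s.card := by
    refine Finset.sum_nbij' (fun b => univ.filter (fun t => b t = true))
      (fun s => fun t => t ∈ s) (fun b _ => by simp) (fun s _ => by simp)
      (fun b _ => by funext t; simp) (fun s _ => by ext t; simp) ?_
    intro b _
    have hc : cnt b = #(univ.filter (fun t => b t = true)) := rfl
    rw [hc]
    congr 1
    rw [Finset.prod_ite, Finset.prod_const, Finset.prod_const]
    have h2 : univ.filter (fun t => ¬ b t = true) = (univ.filter (fun t => b t = true))ᶜ := by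
      ext t; simp
    rw [h2, Finset.card_compl, Fintype.card_fin]
  rw [step1, Finset.sum_powerset_apply_card (f := fun m => p ^ m * (1 - p) ^ (N - m) * g m),
    binExp]
  rw [show #(univ : Finset (Fin N)) = N by simp]
  refine Finset.sum_congr rfl fun m hm => ?_
  rw [nsmul_eq_mul]
  ring


/-- fiber cardinality -/
def fibc {k N : ℕ} (f : Fin k → Fin N) (t : Fin N) : ℕ := #(univ.filter (fun a => f a = t))

lemma moment_eq (N k : ℕ) (p : ℝ) :
    (∑ b : Fin N → Bool, (∏ t, if b t = true then p else (1 - p)) * ((cnt b : ℝ) - N * p) ^ k)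
      = ∑ f : Fin k → Fin N, ∏ t, eMom p (fibc f t) := by
  classical
  set X : Bool → ℝ := fun x => (if x = true then (1:ℝ) else 0) - p with hX
  have hcnt : ∀ b : Fin N → Bool, ((cnt b : ℝ) - N * p) = ∑ t, X (b t) := by
    intro b
    have : ((cnt b : ℝ)) = ∑ t, (if b t = true then (1:ℝ) else 0) := by
      rw [cnt, Finset.sum_boole]
    rw [Finset.sum_sub_distrib, ← this, Finset.sum_const, card_univ, Fintype.card_fin,
      nsmul_eq_mul]
  have hpow : ∀ b : Fin N → Bool, (∑ t, X (b t)) ^ k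
      = ∑ f : Fin k → Fin N, ∏ a : Fin k, X (b (f a)) := by
    intro b
    have h1 : (∑ t, X (b t)) ^ k = ∏ _a : Fin k, (∑ t, X (b t)) := by
      rw [Finset.prod_const, card_univ, Fintype.card_fin]
    rw [h1, Finset.prod_univ_sum, Fintype.piFinset_univ]
  calc (∑ b : Fin N → Bool, (∏ t, if b t = true then p else (1 - p)) * ((cnt b : ℝ) - N * p) ^ k)
      = ∑ b : Fin N → Bool, ∑ f : Fin k → Fin N,
          (∏ t, if b t = true then p else (1 - p)) * ∏ a : Fin k, X (b (f a)) := by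
        refine Finset.sum_congr rfl fun b _ => ?_
        rw [hcnt b, hpow b, Finset.mul_sum]
    _ = ∑ f : Fin k → Fin N, ∑ b : Fin N → Bool,
          (∏ t, if b t = true then p else (1 - p)) * ∏ a : Fin k, X (b (f a)) :=
        Finset.sum_comm
    _ = ∑ f : Fin k → Fin N, ∏ t, eMom p (fibc f t) := by
        refine Finset.sum_congr rfl fun f _ => ?_
        have hfib : ∀ b : Fin N → Bool, (∏ a : Fin k, X (b (f a)))
            = ∏ t, X (b t) ^ fibc f t := by
          intro b
          rw [← Finset.prod_fiberwise_of_maps_to (g := f) (t := univ)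
            (fun a _ => Finset.mem_univ (f a)) (fun a => X (b (f a)))]
          refine Finset.prod_congr rfl fun t _ => ?_
          have : ∀ a ∈ univ.filter (fun a => f a = t), X (b (f a)) = X (b t) := by
            intro a ha
            rw [(Finset.mem_filter.1 ha).2]
          rw [Finset.prod_congr rfl this, Finset.prod_const]
          rfl
        have hsplit : ∀ b : Fin N → Bool,
            (∏ t, if b t = true then p else (1 - p)) * ∏ t, X (b t) ^ fibc f t
              = ∏ t, ((if b t = true then p else (1 - p)) * X (b t) ^ fibc f t) := by
          intro b; rw [Finset.prod_mul_distrib]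
        have hfact : (∑ b : Fin N → Bool,
              ∏ t, ((if b t = true then p else (1 - p)) * X (b t) ^ fibc f t))
            = ∏ t, ∑ x : Bool, ((if x = true then p else (1 - p)) * X x ^ fibc f t) := by
          rw [Finset.prod_univ_sum, Fintype.piFinset_univ]
        calc (∑ b : Fin N → Bool,
              (∏ t, if b t = true then p else (1 - p)) * ∏ a : Fin k, X (b (f a)))
            = ∑ b : Fin N → Bool,
              ∏ t, ((if b t = true then p else (1 - p)) * X (b t) ^ fibc f t) := by
              refine Finset.sum_congr rfl fun b _ => ?_
              rw [hfib b, hsplit b]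
          _ = ∏ t, ∑ x : Bool, ((if x = true then p else (1 - p)) * X x ^ fibc f t) := hfact
          _ = ∏ t, eMom p (fibc f t) := by
              refine Finset.prod_congr rfl fun t _ => ?_
              rw [Fintype.sum_bool]
              simp only [hX, eMom]
              norm_num
              ring


lemma card_bad (k N : ℕ) :
    #(univ.filter (fun f : Fin k → Fin N => ∀ t, fibc f t ≠ 1))
      ≤ N.choose (min (k / 2) N) * (min (k / 2) N) ^ k := by
  classical
  set m : ℕ := min (k / 2) N with hm
  have hsub : univ.filter (fun f : Fin k → Fin N => ∀ t, fibc f t ≠ 1)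
      ⊆ ((univ : Finset (Fin N)).powersetCard m).biUnion
          (fun s => Fintype.piFinset (fun _ : Fin k => s)) := by
    intro f hf
    have hf' := (Finset.mem_filter.1 hf).2
    set img : Finset (Fin N) := Finset.image f univ with himg
    have himgcard : 2 * img.card ≤ k := by
      have hk : k = ∑ t ∈ img, fibc f t := by
        have := Finset.card_eq_sum_card_fiberwise
          (s := (univ : Finset (Fin k))) (t := img) (f := f)
          (fun a _ => Finset.mem_image_of_mem f (Finset.mem_univ a))
        simpa [fibc] using this
      have hge : ∀ t ∈ img, 2 ≤ fibc f t := by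
        intro t ht
        obtain ⟨a, _, rfl⟩ := Finset.mem_image.1 ht
        have h1 : 1 ≤ fibc f (f a) := by
          have : a ∈ univ.filter (fun x => f x = f a) := by simp
          exact Finset.card_pos.2 ⟨a, this⟩
        have := hf' (f a)
        omega
      calc 2 * img.card = ∑ _t ∈ img, 2 := by rw [Finset.sum_const]; ring
        _ ≤ ∑ t ∈ img, fibc f t := Finset.sum_le_sum hge
        _ = k := hk.symm
    have h1 : img.card ≤ m := by
      have h2 : img.card ≤ N := by
        simpa using Finset.card_le_univ img
      omega
    obtain ⟨s, hs1, hs2⟩ := Finset.exists_superset_card_eq h1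
      (by simp [hm])
    refine Finset.mem_biUnion.2 ⟨s, ?_, ?_⟩
    · exact Finset.mem_powersetCard.2 ⟨Finset.subset_univ s, hs2⟩
    · exact Fintype.mem_piFinset.2 fun a => hs1 (Finset.mem_image_of_mem f (Finset.mem_univ a))
  calc #(univ.filter (fun f : Fin k → Fin N => ∀ t, fibc f t ≠ 1))
      ≤ #(((univ : Finset (Fin N)).powersetCard m).biUnion
          (fun s => Fintype.piFinset (fun _ : Fin k => s))) := Finset.card_le_card hsub
    _ ≤ ∑ s ∈ (univ : Finset (Fin N)).powersetCard m,
          #(Fintype.piFinset (fun _ : Fin k => s)) := Finset.card_biUnion_le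
    _ ≤ ∑ s ∈ (univ : Finset (Fin N)).powersetCard m, m ^ k := by
        refine Finset.sum_le_sum fun s hs => ?_
        rw [Fintype.card_piFinset]
        rw [Finset.prod_const, card_univ, Fintype.card_fin,
          (Finset.mem_powersetCard.1 hs).2]
    _ = N.choose m * m ^ k := by
        rw [Finset.sum_const, Finset.card_powersetCard, card_univ, Fintype.card_fin,
          smul_eq_mul]

lemma abs_moment_le (N k : ℕ) (hk : 1 ≤ k) (p : ℝ) (hp0 : 0 ≤ p) (hp1 : p ≤ 1) :
    |∑ f : Fin k → Fin N, ∏ t, eMom p (fibc f t)|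
      ≤ (N.choose (min (k / 2) N) * (min (k / 2) N) ^ k : ℕ) * p := by
  classical
  have habs : |∑ f : Fin k → Fin N, ∏ t, eMom p (fibc f t)|
      ≤ ∑ f : Fin k → Fin N, |∏ t, eMom p (fibc f t)| := Finset.abs_sum_le_sum_abs _ _
  have hzero : ∑ f : Fin k → Fin N, |∏ t, eMom p (fibc f t)|
      = ∑ f ∈ univ.filter (fun f : Fin k → Fin N => ∀ t, fibc f t ≠ 1),
          |∏ t, eMom p (fibc f t)| := by
    symm
    refine Finset.sum_filter_of_ne fun f _ hne => ?_
    by_contra h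
    push_neg at h
    obtain ⟨t, ht⟩ := h
    refine hne ?_
    rw [abs_eq_zero]
    refine Finset.prod_eq_zero (Finset.mem_univ t) ?_
    rw [ht]
    exact eMom_one p
  have hterm : ∀ f ∈ univ.filter (fun f : Fin k → Fin N => ∀ t, fibc f t ≠ 1),
      |∏ t, eMom p (fibc f t)| ≤ p := by
    intro f hf
    have hf' := (Finset.mem_filter.1 hf).2
    set t0 : Fin N := f ⟨0, hk⟩ with ht0
    have hc2 : 2 ≤ fibc f t0 := by
      have h1 : 1 ≤ fibc f t0 := by
        refine Finset.card_pos.2 ⟨⟨0, hk⟩, by simp [fibc, ht0]⟩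
      have := hf' t0
      omega
    rw [Finset.abs_prod, ← Finset.mul_prod_erase _ _ (Finset.mem_univ t0)]
    have h2 : ∏ t ∈ univ.erase t0, |eMom p (fibc f t)| ≤ 1 :=
      Finset.prod_le_one (fun t _ => abs_nonneg _)
        (fun t _ => abs_eMom_le_one p hp0 hp1 _)
    calc |eMom p (fibc f t0)| * ∏ t ∈ univ.erase t0, |eMom p (fibc f t)|
        ≤ p * 1 := mul_le_mul (abs_eMom_le_p p hp0 hp1 hc2) h2
          (Finset.prod_nonneg fun t _ => abs_nonneg _) hp0
      _ = p := mul_one p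
  calc |∑ f : Fin k → Fin N, ∏ t, eMom p (fibc f t)|
      ≤ ∑ f ∈ univ.filter (fun f : Fin k → Fin N => ∀ t, fibc f t ≠ 1),
          |∏ t, eMom p (fibc f t)| := by rw [← hzero]; exact habs
    _ ≤ ∑ _f ∈ univ.filter (fun f : Fin k → Fin N => ∀ t, fibc f t ≠ 1), p :=
        Finset.sum_le_sum hterm
    _ = #(univ.filter (fun f : Fin k → Fin N => ∀ t, fibc f t ≠ 1)) * p := by
        rw [Finset.sum_const, nsmul_eq_mul]
    _ ≤ (N.choose (min (k / 2) N) * (min (k / 2) N) ^ k : ℕ) * p := by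
        have := card_bad k N
        exact mul_le_mul_of_nonneg_right (by exact_mod_cast this) hp0


open Polynomial in
lemma coeff_sum_C_mul_X_pow {α : Type*} (s : Finset α) (a : α → ℝ) (r : α → ℕ) (m : ℕ) :
    (∑ x ∈ s, Polynomial.C (a x) * Polynomial.X ^ r x).coeff m
      = ∑ x ∈ s.filter (fun x => r x = m), a x := by
  rw [Polynomial.finset_sum_coeff, Finset.sum_filter]
  refine Finset.sum_congr rfl fun x _ => ?_
  rw [Polynomial.coeff_C_mul, Polynomial.coeff_X_pow]
  by_cases h : r x = m
  · rw [if_pos h, if_pos h.symm, mul_one]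
  · rw [if_neg h, if_neg (fun hh => h hh.symm), mul_zero]

open Polynomial in
lemma marginal (d N : ℕ) (μ : Fin d → ℝ) (hsum : ∑ j, μ j = 1) (i : Fin d) (g : ℕ → ℝ) :
    multinomialExp d N μ (fun k => g (k i)) = binExp N (μ i) g := by
  classical
  set P : Polynomial ℝ := ∑ j, (if j = i then C (μ j) * X else C (μ j)) with hPdef
  have hP : P = C (μ i) * X + C (1 - μ i) := by
    rw [hPdef, ← Finset.add_sum_erase _ _ (Finset.mem_univ i), if_pos rfl]
    congr 1
    have h1 : ∀ j ∈ univ.erase i, (if j = i then C (μ j) * X else C (μ j)) = C (μ j) := by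
      intro j hj
      rw [if_neg (Finset.mem_erase.1 hj).1]
    rw [Finset.sum_congr rfl h1, ← map_sum]
    congr 1
    have h2 : μ i + ∑ j ∈ univ.erase i, μ j = 1 := by
      rw [Finset.add_sum_erase _ _ (Finset.mem_univ i)]
      exact hsum
    linarith
  have id1 : P ^ N = ∑ k ∈ Finset.Nat.antidiagonalTuple d N,
      C ((Nat.multinomial Finset.univ k : ℝ) * ∏ j, μ j ^ k j) * X ^ (k i) := by
    rw [hPdef, Finset.sum_pow_eq_sum_piAntidiag,
      Finset.piAntidiag_univ_fin_eq_antidiagonalTuple]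
    refine Finset.sum_congr rfl fun k _ => ?_
    have h3 : ∀ j : Fin d, (if j = i then C (μ j) * X else C (μ j)) ^ k j
        = C (μ j ^ k j) * X ^ (if j = i then k j else 0) := by
      intro j
      split_ifs with h
      · rw [mul_pow, map_pow]
      · rw [map_pow, pow_zero, mul_one]
    rw [Finset.prod_congr rfl (fun j _ => h3 j), Finset.prod_mul_distrib, ← map_prod,
      Finset.prod_pow_eq_pow_sum, Finset.sum_ite_eq', if_pos (Finset.mem_univ i),
      map_mul, map_natCast]
    ring
  have id2 : P ^ N = ∑ r ∈ Finset.range (N + 1),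
      C ((N.choose r : ℝ) * μ i ^ r * (1 - μ i) ^ (N - r)) * X ^ r := by
    rw [hP, add_pow]
    refine Finset.sum_congr rfl fun r _ => ?_
    rw [mul_pow, map_mul, map_mul, map_natCast, map_pow, map_pow]
    ring
  have key : ∀ m ∈ Finset.range (N + 1),
      (∑ k ∈ (Finset.Nat.antidiagonalTuple d N).filter (fun k => k i = m),
        ((Nat.multinomial Finset.univ k : ℝ) * ∏ j, μ j ^ k j))
      = (N.choose m : ℝ) * μ i ^ m * (1 - μ i) ^ (N - m) := by
    intro m hm
    have h4 := congrArg (fun q : Polynomial ℝ => q.coeff m) (id1.symm.trans id2)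
    simp only [coeff_sum_C_mul_X_pow] at h4
    rw [h4, Finset.filter_eq', if_pos hm, Finset.sum_singleton]
  have hmaps : ∀ k ∈ Finset.Nat.antidiagonalTuple d N, k i ∈ Finset.range (N + 1) := by
    intro k hk
    rw [Finset.Nat.mem_antidiagonalTuple] at hk
    rw [Finset.mem_range, Nat.lt_succ_iff, ← hk]
    exact Finset.single_le_sum (f := fun j => k j) (fun j _ => Nat.zero_le _)
      (Finset.mem_univ i)
  rw [multinomialExp, binExp, ← Finset.sum_fiberwise_of_maps_to hmaps]
  refine Finset.sum_congr rfl fun m hm => ?_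
  have h5 : ∀ k ∈ (Finset.Nat.antidiagonalTuple d N).filter (fun k => k i = m),
      ((Nat.multinomial Finset.univ k : ℝ) * ∏ j, μ j ^ k j) * g (k i)
        = ((Nat.multinomial Finset.univ k : ℝ) * ∏ j, μ j ^ k j) * g m := by
    intro k hk
    rw [(Finset.mem_filter.1 hk).2]
  rw [Finset.sum_congr rfl h5, ← Finset.sum_mul, key m hm]

lemma binExp_congr (N : ℕ) (p : ℝ) {g h : ℕ → ℝ} (hgh : ∀ m, g m = h m) :
    binExp N p g = binExp N p h := by
  unfold binExp
  exact Finset.sum_congr rfl fun m _ => by rw [hgh m]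

lemma binExp_one (N : ℕ) (p : ℝ) : binExp N p (fun _ => 1) = 1 := by
  unfold binExp
  have h := add_pow p (1 - p) N
  simp only [add_sub_cancel, one_pow] at h
  exact Eq.trans (Finset.sum_congr rfl fun m _ => by ring) h.symm

lemma binExp_sub (N : ℕ) (p : ℝ) (A B : ℕ → ℝ) :
    binExp N p (fun m => A m - B m) = binExp N p A - binExp N p B := by
  unfold binExp
  rw [← Finset.sum_sub_distrib]
  exact Finset.sum_congr rfl fun m _ => by ring

lemma binExp_sum {ι : Type*} (N : ℕ) (p : ℝ) (s : Finset ι) (h : ι → ℕ → ℝ) :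
    binExp N p (fun m => ∑ k ∈ s, h k m) = ∑ k ∈ s, binExp N p (h k) := by
  unfold binExp
  rw [Finset.sum_comm]
  exact Finset.sum_congr rfl fun m _ => by rw [Finset.mul_sum]

lemma binExp_const_mul (N : ℕ) (p : ℝ) (c : ℝ) (h : ℕ → ℝ) :
    binExp N p (fun m => c * h m) = c * binExp N p h := by
  unfold binExp
  rw [Finset.mul_sum]
  exact Finset.sum_congr rfl fun m _ => by ring

lemma M_eq (N k : ℕ) (p : ℝ) :
    binExp N p (fun m => ((m : ℝ) - N * p) ^ k)
      = ∑ f : Fin k → Fin N, ∏ t, eMom p (fibc f t) :=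
  (prodModel N p _).symm.trans (moment_eq N k p)

lemma M_zero (N : ℕ) (p : ℝ) : binExp N p (fun m => ((m : ℝ) - N * p) ^ 0) = 1 := by
  rw [binExp_congr N p (fun m => pow_zero _), binExp_one]

lemma M_one (N : ℕ) (p : ℝ) : binExp N p (fun m => ((m : ℝ) - N * p) ^ 1) = 0 := by
  rw [M_eq]
  refine Finset.sum_eq_zero fun f _ => Finset.prod_eq_zero (Finset.mem_univ (f 0)) ?_
  have h1 : fibc f (f 0) = 1 := by
    rw [fibc]
    have : univ.filter (fun a : Fin 1 => f a = f 0) = univ := by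
      ext a
      simp [Subsingleton.elim a 0]
    rw [this, card_univ, Fintype.card_fin]
  rw [h1]
  exact eMom_one p

lemma binExp_expand (N ℓ : ℕ) (p : ℝ) (hNp : (N : ℝ) * p ≠ 0) (hℓ : 1 ≤ ℓ) :
    binExp N p (fun m => ((m : ℝ) / ((N : ℝ) * p)) ^ ℓ - 1)
      = ∑ k ∈ Finset.Icc 2 ℓ, (ℓ.choose k : ℝ) * (((N : ℝ) * p)⁻¹) ^ k
          * binExp N p (fun m => ((m : ℝ) - N * p) ^ k) := by
  have hpt : ∀ x : ℝ, (x / ((N : ℝ) * p)) ^ ℓ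
      = ∑ k ∈ Finset.range (ℓ + 1),
          (ℓ.choose k : ℝ) * (((N : ℝ) * p)⁻¹) ^ k * (x - N * p) ^ k := by
    intro x
    have h1 : x / ((N : ℝ) * p) = (x - N * p) * ((N : ℝ) * p)⁻¹ + 1 := by
      field_simp
      rw [sub_div, div_self hNp]; ring
    rw [h1, add_pow]
    refine Finset.sum_congr rfl fun k _ => ?_
    rw [one_pow, mul_pow, mul_one]
    ring
  have step1 : binExp N p (fun m => ((m : ℝ) / ((N : ℝ) * p)) ^ ℓ - 1)
      = (∑ k ∈ Finset.range (ℓ + 1), (ℓ.choose k : ℝ) * (((N : ℝ) * p)⁻¹) ^ k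
          * binExp N p (fun m => ((m : ℝ) - N * p) ^ k)) - 1 := by
    rw [binExp_congr N p (fun m => by rw [hpt (m : ℝ)]), binExp_sub, binExp_one,
      binExp_sum]
    congr 1
    refine Finset.sum_congr rfl fun k _ => ?_
    rw [← binExp_const_mul]
  rw [step1, Finset.range_eq_Ico,
    ← Finset.sum_Ico_consecutive _ (by omega : 0 ≤ 2) (by omega : 2 ≤ ℓ + 1)]
  have h2 : ∑ k ∈ Finset.Ico 0 2, (ℓ.choose k : ℝ) * (((N : ℝ) * p)⁻¹) ^ k
      * binExp N p (fun m => ((m : ℝ) - N * p) ^ k) = 1 := by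
    show ∑ k ∈ Finset.range 2, _ = 1
    rw [Finset.sum_range_succ, Finset.sum_range_one, M_zero, M_one]
    simp
  rw [h2, Finset.Ico_add_one_right_eq_Icc]
  ring

lemma term_bound2 (ℓ N : ℕ) (hN : 1 ≤ N) (p : ℝ) (hp0 : 0 < p) (hp1 : p ≤ 1) :
    (ℓ.choose 2 : ℝ) * (((N : ℝ) * p)⁻¹) ^ 2 * |binExp N p (fun m => ((m : ℝ) - N * p) ^ 2)|
      ≤ (ℓ : ℝ) * ((ℓ : ℝ) - 1) / (2 * N * p) := by
  have hM := abs_moment_le N 2 (by omega) p hp0.le hp1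
  rw [← M_eq] at hM
  have h1 : min (2 / 2 : ℕ) N = 1 := by omega
  rw [h1] at hM
  have hM' : |binExp N p (fun m => ((m : ℝ) - N * p) ^ 2)| ≤ (N : ℝ) * p := by
    refine hM.trans_eq ?_
    rw [Nat.choose_one_right]
    push_cast
    ring
  have hN0 : (0 : ℝ) < N := by exact_mod_cast hN
  calc (ℓ.choose 2 : ℝ) * (((N : ℝ) * p)⁻¹) ^ 2 * |binExp N p (fun m => ((m : ℝ) - N * p) ^ 2)|
      ≤ (ℓ.choose 2 : ℝ) * (((N : ℝ) * p)⁻¹) ^ 2 * ((N : ℝ) * p) := by gcongr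
    _ = (ℓ : ℝ) * ((ℓ : ℝ) - 1) / (2 * N * p) := by
        rw [Nat.cast_choose_two]
        field_simp

lemma term_bound3 (ℓ N k : ℕ) (hN : 1 ≤ N) (hk3 : 3 ≤ k) (hkl : k ≤ ℓ)
    (p : ℝ) (hp0 : 0 < p) (hp1 : p ≤ 1) :
    (ℓ.choose k : ℝ) * (((N : ℝ) * p)⁻¹) ^ k * |binExp N p (fun m => ((m : ℝ) - N * p) ^ k)|
      ≤ (ℓ : ℝ) ^ ℓ * (ℓ : ℝ) ^ ℓ * (((N : ℝ) ^ ((k : ℝ) / 2))⁻¹ * (p ^ (k - 1))⁻¹) := by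
  have hN0 : (0 : ℝ) < N := by exact_mod_cast hN
  have hN1 : (1 : ℝ) ≤ N := by exact_mod_cast hN
  have hM := abs_moment_le N k (by omega) p hp0.le hp1
  rw [← M_eq] at hM
  set m' : ℕ := min (k / 2) N with hm'
  have hMr : |binExp N p (fun m => ((m : ℝ) - N * p) ^ k)|
      ≤ (N.choose m' : ℝ) * (m' : ℝ) ^ k * p := by
    refine hM.trans_eq ?_
    push_cast
    ring
  have hA : (ℓ.choose k : ℝ) * (m' : ℝ) ^ k ≤ (ℓ : ℝ) ^ ℓ * (ℓ : ℝ) ^ ℓ := by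
    have h1 : ℓ.choose k * m' ^ k ≤ ℓ ^ ℓ * ℓ ^ ℓ := by
      refine Nat.mul_le_mul ?_ ?_
      · exact (Nat.choose_le_pow ℓ k).trans (Nat.pow_le_pow_right (by omega) hkl)
      · refine (Nat.pow_le_pow_left ?_ k).trans (Nat.pow_le_pow_right (by omega) hkl)
        omega
    exact_mod_cast h1
  have hB : (N.choose m' : ℝ) * (((N : ℝ)) ^ k)⁻¹ ≤ ((N : ℝ) ^ ((k : ℝ) / 2))⁻¹ := by
    have hc : (N.choose m' : ℝ) ≤ (N : ℝ) ^ m' := by exact_mod_cast Nat.choose_le_pow N m'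
    have h2 : (N : ℝ) ^ m' * (((N : ℝ)) ^ k)⁻¹ ≤ ((N : ℝ) ^ ((k : ℝ) / 2))⁻¹ := by
      rw [← Real.rpow_natCast (N : ℝ) m', ← Real.rpow_natCast (N : ℝ) k,
        ← Real.rpow_neg hN0.le, ← Real.rpow_neg hN0.le, ← Real.rpow_add hN0]
      refine Real.rpow_le_rpow_of_exponent_le hN1 ?_
      have h3 : (m' : ℝ) ≤ (k : ℝ) / 2 := by
        refine le_trans ?_ (Nat.cast_div_le)
        exact_mod_cast Nat.min_le_left (k / 2) N
      linarith
    calc (N.choose m' : ℝ) * (((N : ℝ)) ^ k)⁻¹ ≤ (N : ℝ) ^ m' * (((N : ℝ)) ^ k)⁻¹ := by gcongr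
      _ ≤ ((N : ℝ) ^ ((k : ℝ) / 2))⁻¹ := h2
  have hC : (p ^ k)⁻¹ * p = (p ^ (k - 1))⁻¹ := by
    have h4 : p ^ (k - 1) * p = p ^ k := by
      rw [← pow_succ]
      congr 1
      omega
    rw [← h4, mul_inv, mul_assoc, inv_mul_cancel₀ hp0.ne', mul_one]
  calc (ℓ.choose k : ℝ) * (((N : ℝ) * p)⁻¹) ^ k * |binExp N p (fun m => ((m : ℝ) - N * p) ^ k)|
      ≤ (ℓ.choose k : ℝ) * (((N : ℝ) * p)⁻¹) ^ k * ((N.choose m' : ℝ) * (m' : ℝ) ^ k * p) := by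
        gcongr
    _ = ((ℓ.choose k : ℝ) * (m' : ℝ) ^ k) * ((N.choose m' : ℝ) * (((N : ℝ)) ^ k)⁻¹)
          * ((p ^ k)⁻¹ * p) := by
        rw [mul_inv, mul_pow, inv_pow, inv_pow]
        ring
    _ ≤ ((ℓ : ℝ) ^ ℓ * (ℓ : ℝ) ^ ℓ) * ((N : ℝ) ^ ((k : ℝ) / 2))⁻¹ * ((p ^ (k - 1))⁻¹) := by
        rw [hC]
        refine mul_le_mul (mul_le_mul hA hB ?_ ?_) le_rfl ?_ ?_ <;> positivity
    _ = (ℓ : ℝ) ^ ℓ * (ℓ : ℝ) ^ ℓ * (((N : ℝ) ^ ((k : ℝ) / 2))⁻¹ * (p ^ (k - 1))⁻¹) := by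
        ring

end MultProof


open MultProof in
/-- `|E[(S[i]/(Nμ[i]))^ℓ − 1]| ≤ ℓ(ℓ−1)/(2Nμ[i]) + C Σ_{k=3}^ℓ N^{−k/2} μ[i]^{−(k−1)}`. -/
theorem multinomial_ratio_power_mean_bound (ℓ : ℕ) (hℓ : 1 ≤ ℓ) :
    ∃ C : ℝ, ∀ (d N : ℕ), 1 ≤ N → ∀ (μ : Fin d → ℝ),
      (∀ j, 0 < μ j) → (∑ j, μ j = 1) → ∀ i : Fin d,
      |multinomialExp d N μ (fun k => ((k i : ℝ) / (N * μ i)) ^ ℓ - 1)|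
        ≤ (ℓ : ℝ) * ((ℓ : ℝ) - 1) / (2 * N * μ i)
          + C * ∑ k ∈ Finset.Icc 3 ℓ,
              ((N : ℝ) ^ ((k : ℝ) / 2))⁻¹ * (μ i ^ (k - 1))⁻¹ := by
  classical
  refine ⟨(ℓ : ℝ) ^ ℓ * (ℓ : ℝ) ^ ℓ, ?_⟩
  intro d N hN μ hpos hsum i
  have hp0 : 0 < μ i := hpos i
  have hp1 : μ i ≤ 1 := by
    rw [← hsum]
    exact Finset.single_le_sum (fun j _ => (hpos j).le) (Finset.mem_univ i)
  have hN0 : (0 : ℝ) < N := by exact_mod_cast hN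
  have hNp : (0 : ℝ) < (N : ℝ) * μ i := by positivity
  have hLHS : multinomialExp d N μ (fun k => ((k i : ℝ) / (N * μ i)) ^ ℓ - 1)
      = binExp N (μ i) (fun m => ((m : ℝ) / ((N : ℝ) * μ i)) ^ ℓ - 1) :=
    marginal d N μ hsum i (fun m => ((m : ℝ) / ((N : ℝ) * μ i)) ^ ℓ - 1)
  rw [hLHS, binExp_expand N ℓ (μ i) hNp.ne' hℓ]
  have habs : |∑ k ∈ Finset.Icc 2 ℓ, (ℓ.choose k : ℝ) * (((N : ℝ) * μ i)⁻¹) ^ k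
        * binExp N (μ i) (fun m => ((m : ℝ) - N * μ i) ^ k)|
      ≤ ∑ k ∈ Finset.Icc 2 ℓ, (ℓ.choose k : ℝ) * (((N : ℝ) * μ i)⁻¹) ^ k
        * |binExp N (μ i) (fun m => ((m : ℝ) - N * μ i) ^ k)| := by
    refine (Finset.abs_sum_le_sum_abs _ _).trans (le_of_eq ?_)
    refine Finset.sum_congr rfl fun k _ => ?_
    rw [abs_mul, abs_mul]
    congr 2
    · exact abs_of_nonneg (by positivity)
    · exact abs_of_nonneg (by positivity)
  refine habs.trans ?_
  rcases Nat.lt_or_ge ℓ 2 with hl2 | hl2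
  · have h1 : ℓ = 1 := by omega
    subst h1
    simp
  · have hsplit : Finset.Icc 2 ℓ = insert 2 (Finset.Icc 3 ℓ) := by
      ext a
      simp only [Finset.mem_Icc, Finset.mem_insert]
      omega
    rw [hsplit, Finset.sum_insert (by simp)]
    refine add_le_add (term_bound2 ℓ N hN (μ i) hp0 hp1) ?_
    rw [Finset.mul_sum]
    refine Finset.sum_le_sum fun k hk => ?_
    have hk' := Finset.mem_Icc.1 hk
    exact (term_bound3 ℓ N k hN hk'.1 hk'.2 (μ i) hp0 hp1).trans (le_of_eq (by ring))
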